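/- Uniform Lipschitz bound for the Euler approximations: fix T > 0, n ≥ 1, continuous f₁,…,f_n : [0,T] → ℝ with f_i(0) ≥ 0 for each i, and K ≥ 0, with initial velocity v = 0. Then for every ε > 0 the function I^{(ε)} is nondecreasing and convex on [0,T], and is Lipschitz with Lipschitz constant at most (K/n) ∑_{i=1}^n sup_{0 ≤ u ≤ T} max(−f_i(u), 0); in particular this bound is independent of ε. -/

import Mathlib

open Set

/-- `J` is the piecewise linear Euler approximation with mesh `ε` for the data
`(f, K)` (initial velocity `v = 0`): `J ≡ 0` on `[0, ε] ∩ [0,T]`, and on each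
subsequent grid interval `[Mε, (M+1)ε] ∩ [0,T]` (for `M ≥ 1`) it is linear with slope
`(K/n) ∑ᵢ sup_{0 ≤ u ≤ Mε} max(-(f_i(u) + J(u)), 0)`. -/
def IsEulerApprox (T : ℝ) (n : ℕ) (f : Fin n → ℝ → ℝ) (K ε : ℝ)
    (J : ℝ → ℝ) : Prop :=
  (∀ t ∈ Set.Icc 0 (min ε T), J t = 0) ∧
  ∀ M : ℕ, 1 ≤ M →
    ∀ t ∈ Set.Icc ((M : ℝ) * ε) (((M : ℝ) + 1) * ε) ∩ Set.Icc (0:ℝ) T,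
      J t = J ((M : ℝ) * ε) +
        (K / (n : ℝ)) *
          (∑ i, sSup ((fun u => max (-(f i u + J u)) 0) '' Set.Icc 0 ((M : ℝ) * ε))) *
          (t - (M : ℝ) * ε)

/-- The slope of the Euler approximation on the `M`-th grid cell. -/
noncomputable def eaA {n : ℕ} (f : Fin n → ℝ → ℝ) (K : ℝ) (J : ℝ → ℝ) (ε : ℝ) (M : ℕ) : ℝ :=
  (K / (n : ℝ)) *
    ∑ i, sSup ((fun u => max (-(f i u + J u)) 0) '' Set.Icc 0 ((M : ℝ) * ε))

/-- Uniform Lipschitz bound for the Euler approximations: every `I^{(ε)}` is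
nondecreasing and convex on `[0,T]`, and Lipschitz there with constant
`(K/n) ∑ᵢ sup_{0 ≤ u ≤ T} max(-f_i(u), 0)`, independent of `ε`. -/
theorem stmt_16 (T : ℝ) (hT : 0 < T) (n : ℕ) (hn : 1 ≤ n)
    (f : Fin n → ℝ → ℝ) (hf : ∀ i, ContinuousOn (f i) (Set.Icc 0 T))
    (hf0 : ∀ i, 0 ≤ f i 0) (K : ℝ) (hK : 0 ≤ K)
    (ε : ℝ) (hε : 0 < ε) (J : ℝ → ℝ) (hJ : IsEulerApprox T n f K ε J) :
    MonotoneOn J (Set.Icc 0 T) ∧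
    ConvexOn ℝ (Set.Icc 0 T) J ∧
    ∀ s ∈ Set.Icc 0 T, ∀ t ∈ Set.Icc 0 T,
      |J t - J s| ≤
        ((K / (n : ℝ)) *
          ∑ i, sSup ((fun u => max (-(f i u)) 0) '' Set.Icc 0 T)) * |t - s| := by
  obtain ⟨h0, hMstep⟩ := hJ
  have hε' : (0:ℝ) ≤ ε := hε.le
  have hn' : (0:ℝ) < n := by exact_mod_cast Nat.pos_of_ne_zero (by omega)
  have hKn : 0 ≤ K / (n : ℝ) := div_nonneg hK hn'.le
  have hminpos : (0:ℝ) ≤ min ε T := le_min hε' hT.le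
  have hJ0 : J 0 = 0 := h0 0 ⟨le_refl 0, hminpos⟩
  have hSbdd : ∀ i, BddAbove ((fun u => max (-(f i u)) 0) '' Set.Icc 0 T) := fun i =>
    isCompact_Icc.bddAbove_image
      ((continuous_id.max continuous_const).comp_continuousOn (hf i).neg)
  have hS0 : ∀ i, 0 ≤ sSup ((fun u => max (-(f i u)) 0) '' Set.Icc 0 T) := fun i =>
    le_trans (le_max_right (-(f i 0)) 0)
      (le_csSup (hSbdd i) ⟨0, ⟨le_refl 0, hT.le⟩, rfl⟩)
  have ha_nonneg : ∀ M, 0 ≤ eaA f K J ε M := by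
    intro M
    refine mul_nonneg hKn (Finset.sum_nonneg fun i _ => Real.sSup_nonneg ?_)
    rintro x ⟨u, hu, rfl⟩
    exact le_max_right _ _
  have ha0 : eaA f K J ε 0 = 0 := by
    unfold eaA
    have : ∀ i : Fin n,
        sSup ((fun u => max (-(f i u + J u)) 0) '' Set.Icc 0 (((0:ℕ):ℝ) * ε)) = 0 := by
      intro i
      have h1 : ((0:ℕ):ℝ) * ε = 0 := by norm_num
      rw [h1, Set.Icc_self, Set.image_singleton, csSup_singleton]
      rw [hJ0, add_zero]
      exact max_eq_right (neg_nonpos.mpr (hf0 i))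
    rw [Finset.sum_congr rfl fun i _ => this i]
    simp
  have hcell : ∀ M : ℕ, ∀ t : ℝ, (M:ℝ) * ε ≤ t → t ≤ ((M:ℝ) + 1) * ε → 0 ≤ t → t ≤ T →
      J t = J ((M:ℝ) * ε) + eaA f K J ε M * (t - (M:ℝ) * ε) := by
    intro M t h1 h2 h3 h4
    rcases Nat.eq_zero_or_pos M with rfl | hM1
    · simp only [Nat.cast_zero, zero_mul] at h1 h2 ⊢
      rw [h0 t ⟨h3, le_min (by linarith) h4⟩, hJ0, ha0]
      ring
    · exact hMstep M hM1 t (Set.mem_inter (Set.mem_Icc.mpr ⟨h1, h2⟩) (Set.mem_Icc.mpr ⟨h3, h4⟩))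
  have hJnn' : ∀ M : ℕ, ∀ t : ℝ, 0 ≤ t → t ≤ ((M:ℝ) + 1) * ε → t ≤ T → 0 ≤ J t := by
    intro M
    induction M with
    | zero =>
      intro t h1 h2 h3
      rw [h0 t ⟨h1, le_min (by push_cast at h2; linarith) h3⟩]
    | succ M ih =>
      intro t h1 h2 h3
      push_cast at h2
      by_cases hc : t ≤ ((M:ℝ) + 1) * ε
      · exact ih t h1 hc h3
      · have hc' : ((M:ℝ) + 1) * ε ≤ t := (not_le.mp hc).le
        have heq := hcell (M + 1) t (by push_cast; linarith) (by push_cast; linarith) h1 h3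
        push_cast at heq
        rw [heq]
        have h4 : 0 ≤ J (((M:ℝ) + 1) * ε) :=
          ih (((M:ℝ) + 1) * ε) (by positivity) le_rfl (hc'.trans h3)
        exact add_nonneg h4 (mul_nonneg (ha_nonneg (M + 1)) (by linarith))
  have hJnn : ∀ t ∈ Set.Icc (0:ℝ) T, 0 ≤ J t := by
    intro t ht
    refine hJnn' ⌊t / ε⌋₊ t ht.1 ?_ ht.2
    have := Nat.lt_floor_add_one (t / ε)
    have := (div_lt_iff₀ hε).mp this
    linarith
  have hgS : ∀ (i : Fin n) (u : ℝ), u ∈ Set.Icc (0:ℝ) T →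
      max (-(f i u + J u)) 0 ≤ sSup ((fun u => max (-(f i u)) 0) '' Set.Icc 0 T) := by
    intro i u hu
    refine max_le ?_ (hS0 i)
    have h1 : 0 ≤ J u := hJnn u hu
    have h2 : -(f i u + J u) ≤ -(f i u) := by linarith
    exact h2.trans ((le_max_left _ _).trans (le_csSup (hSbdd i) ⟨u, hu, rfl⟩))
  have hamono : ∀ k m : ℕ, k ≤ m → (m:ℝ) * ε ≤ T → eaA f K J ε k ≤ eaA f K J ε m := by
    intro k m hkm hmT
    unfold eaA
    refine mul_le_mul_of_nonneg_left (Finset.sum_le_sum fun i _ => ?_) hKn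
    refine csSup_le_csSup ?_ ?_ ?_
    · refine ⟨sSup ((fun u => max (-(f i u)) 0) '' Set.Icc 0 T), ?_⟩
      rintro x ⟨u, hu, rfl⟩
      exact hgS i u ⟨hu.1, hu.2.trans hmT⟩
    · exact (Set.nonempty_Icc.mpr (by positivity)).image _
    · exact Set.image_mono (Set.Icc_subset_Icc le_rfl
        (mul_le_mul_of_nonneg_right (Nat.cast_le.mpr hkm) hε'))
  have haL : ∀ m : ℕ, (m:ℝ) * ε ≤ T → eaA f K J ε m ≤
      (K / (n:ℝ)) * ∑ i, sSup ((fun u => max (-(f i u)) 0) '' Set.Icc 0 T) := by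
    intro m hmT
    unfold eaA
    refine mul_le_mul_of_nonneg_left (Finset.sum_le_sum fun i _ => ?_) hKn
    refine Real.sSup_le ?_ (hS0 i)
    rintro x ⟨u, hu, rfl⟩
    exact hgS i u ⟨hu.1, hu.2.trans hmT⟩
  -- floor facts
  have hfl_le : ∀ s : ℝ, 0 ≤ s → (⌊s / ε⌋₊ : ℝ) * ε ≤ s := by
    intro s hs
    have := Nat.floor_le (div_nonneg hs hε')
    exact (le_div_iff₀ hε).mp this
  have hfl_lt : ∀ s : ℝ, s < ((⌊s / ε⌋₊ : ℝ) + 1) * ε := by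
    intro s
    have := Nat.lt_floor_add_one (s / ε)
    have := (div_lt_iff₀ hε).mp this
    linarith
  -- key two-point inequality
  have key : ∀ M : ℕ, ∀ s t : ℝ, 0 ≤ s → s ≤ t → (M:ℝ) * ε ≤ t → t ≤ ((M:ℝ) + 1) * ε → t ≤ T →
      eaA f K J ε ⌊s / ε⌋₊ * (t - s) ≤ J t - J s ∧ J t - J s ≤ eaA f K J ε M * (t - s) := by
    intro M
    induction M with
    | zero =>
      intro s t hs hst h1 h2 h3
      push_cast at h2
      have hte : t ≤ ε := by linarith
      have hJt : J t = 0 := h0 t ⟨hs.trans hst, le_min hte h3⟩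
      have hJs : J s = 0 := h0 s ⟨hs, le_min (hst.trans hte) (hst.trans h3)⟩
      rw [hJt, hJs]
      constructor
      · rcases eq_or_lt_of_le hst with rfl | h
        · simp
        · have hc : ⌊s / ε⌋₊ = 0 :=
            Nat.floor_eq_zero.mpr ((div_lt_one hε).mpr (h.trans_le hte))
          rw [hc, ha0]
          simp
      · rw [ha0]
        simp
    | succ M ih =>
      intro s t hs hst h1 h2 h3
      push_cast at h1 h2
      by_cases hcase : ((M:ℝ) + 1) * ε ≤ s
      · -- same cell M+1
        have hJt := hcell (M + 1) t (by push_cast; linarith) (by push_cast; linarith)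
          (hs.trans hst) h3
        have hJs := hcell (M + 1) s (by push_cast; linarith) (by push_cast; linarith)
          hs (hst.trans h3)
        push_cast at hJt hJs
        have hdiff : J t - J s = eaA f K J ε (M + 1) * (t - s) := by
          rw [hJt, hJs]; ring
        constructor
        · rcases eq_or_lt_of_le hst with rfl | hlt
          · simp
          · have hc : ⌊s / ε⌋₊ = M + 1 := by
              rw [Nat.floor_eq_iff (div_nonneg hs hε')]
              constructor
              · push_cast
                rw [le_div_iff₀ hε]
                linarith
              · push_cast
                rw [div_lt_iff₀ hε]
                linarith
            rw [hc, hdiff]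
        · rw [hdiff]
      · have hs1 : s < ((M:ℝ) + 1) * ε := lt_of_not_ge hcase
        have hTme : ((M:ℝ) + 1) * ε ≤ T := h1.trans h3
        obtain ⟨IHl, IHu⟩ := ih s (((M:ℝ) + 1) * ε) hs hs1.le (by nlinarith) le_rfl hTme
        have hJt := hcell (M + 1) t (by push_cast; linarith) (by push_cast; linarith)
          (hs.trans hst) h3
        push_cast at hJt
        have hcsM : ⌊s / ε⌋₊ ≤ M := by
          have : ⌊s / ε⌋₊ < M + 1 := by
            rw [Nat.floor_lt (div_nonneg hs hε')]
            push_cast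
            rw [div_lt_iff₀ hε]
            linarith
          omega
        have hm1 : eaA f K J ε ⌊s / ε⌋₊ ≤ eaA f K J ε (M + 1) :=
          hamono _ _ (by omega) (by push_cast; linarith)
        have hm2 : eaA f K J ε M ≤ eaA f K J ε (M + 1) :=
          hamono M (M + 1) (by omega) (by push_cast; linarith)
        constructor
        · have e1 : eaA f K J ε ⌊s / ε⌋₊ * (t - ((M:ℝ) + 1) * ε) ≤
              eaA f K J ε (M + 1) * (t - ((M:ℝ) + 1) * ε) :=
            mul_le_mul_of_nonneg_right hm1 (by linarith)
          have expand : eaA f K J ε ⌊s / ε⌋₊ * (t - s) =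
              eaA f K J ε ⌊s / ε⌋₊ * (t - ((M:ℝ) + 1) * ε) +
              eaA f K J ε ⌊s / ε⌋₊ * (((M:ℝ) + 1) * ε - s) := by ring
          rw [expand, hJt]
          linarith
        · have e2 : eaA f K J ε M * (((M:ℝ) + 1) * ε - s) ≤
              eaA f K J ε (M + 1) * (((M:ℝ) + 1) * ε - s) :=
            mul_le_mul_of_nonneg_right hm2 (by linarith)
          have expand : eaA f K J ε (M + 1) * (t - s) =
              eaA f K J ε (M + 1) * (t - ((M:ℝ) + 1) * ε) +
              eaA f K J ε (M + 1) * (((M:ℝ) + 1) * ε - s) := by ring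
          rw [expand, hJt]
          linarith
  have key' : ∀ s ∈ Set.Icc (0:ℝ) T, ∀ t ∈ Set.Icc (0:ℝ) T, s ≤ t →
      eaA f K J ε ⌊s / ε⌋₊ * (t - s) ≤ J t - J s ∧
      J t - J s ≤ eaA f K J ε ⌊t / ε⌋₊ * (t - s) := by
    intro s hs t ht hst
    exact key ⌊t / ε⌋₊ s t hs.1 hst (hfl_le t ht.1) (hfl_lt t).le ht.2
  have hmono : MonotoneOn J (Set.Icc 0 T) := by
    intro s hs t ht hst
    have h1 := (key' s hs t ht hst).1
    have h2 : 0 ≤ eaA f K J ε ⌊s / ε⌋₊ * (t - s) :=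
      mul_nonneg (ha_nonneg _) (by linarith)
    linarith
  refine ⟨hmono, ?_, ?_⟩
  · refine convexOn_of_slope_mono_adjacent (convex_Icc 0 T) ?_
    intro x y z hx hz hxy hyz
    have hy : y ∈ Set.Icc (0:ℝ) T := ⟨hx.1.trans hxy.le, hyz.le.trans hz.2⟩
    have h1 := (key' x hx y hy hxy.le).2
    have h2 := (key' y hy z hz hyz.le).1
    rw [div_le_iff₀ (by linarith)]
    rw [le_div_iff₀ (by linarith)] at *
    calc (J y - J x) ≤ eaA f K J ε ⌊y / ε⌋₊ * (y - x) := h1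
      _ = eaA f K J ε ⌊y / ε⌋₊ * (y - x) := rfl
      _ ≤ (J z - J y) / (z - y) * (y - x) := by
          refine mul_le_mul_of_nonneg_right ?_ (by linarith)
          rw [le_div_iff₀ (by linarith)]
          exact h2
  · intro s hs t ht
    rcases le_total s t with h | h
    · have h1 := (key' s hs t ht h).2
      have h2 : eaA f K J ε ⌊t / ε⌋₊ * (t - s) ≤
          ((K / (n:ℝ)) * ∑ i, sSup ((fun u => max (-(f i u)) 0) '' Set.Icc 0 T)) * (t - s) :=
        mul_le_mul_of_nonneg_right (haL _ ((hfl_le t ht.1).trans ht.2)) (by linarith)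
      have h3 : 0 ≤ J t - J s := by
        have := hmono hs ht h
        linarith
      rw [abs_of_nonneg h3, abs_of_nonneg (by linarith : (0:ℝ) ≤ t - s)]
      linarith
    · have h1 := (key' t ht s hs h).2
      have h2 : eaA f K J ε ⌊s / ε⌋₊ * (s - t) ≤
          ((K / (n:ℝ)) * ∑ i, sSup ((fun u => max (-(f i u)) 0) '' Set.Icc 0 T)) * (s - t) :=
        mul_le_mul_of_nonneg_right (haL _ ((hfl_le s hs.1).trans hs.2)) (by linarith)
      have h3 : 0 ≤ J s - J t := by
        have := hmono ht hs h
        linarith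
      rw [abs_sub_comm (J t) (J s), abs_of_nonneg h3, abs_sub_comm t s,
        abs_of_nonneg (by linarith : (0:ℝ) ≤ s - t)]
      linarith
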